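/- Let α ∈ (0,1), ε ∈ (0,1], let φ : ℝ^d → ℝ and U : ℝ^d × ℝ → ℝ^d be C¹ with U 1-periodic in θ, and set u^ε(x) = ε^α U(x, φ(x)/ε). Suppose there is a point (x₀, θ₀) and indices i ≠ j with m := |∂ⱼφ(x₀) ∂_θUⁱ(x₀,θ₀) − ∂ᵢφ(x₀) ∂_θUʲ(x₀,θ₀)| > 0. Then for every C > 0 there exists ε₁ ∈ (0,1] such that for all ε ∈ (0,ε₁], sup_x |∂ⱼ(u^ε)ⁱ(x) − ∂ᵢ(u^ε)ʲ(x)| ≥ C. More precisely sup_x |Ω^ε_{ij}(x)| ≥ (m/2) ε^{α−1} for ε small, so the vorticity blows up at rate ε^{α−1} as ε → 0 while ‖u^ε‖_{L^∞} = O(ε^α) → 0. -/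

import Mathlib

open Set Filter Topology

private lemma per_int {d : ℕ} (U : (Fin d → ℝ) × ℝ → Fin d → ℝ)
    (hper : ∀ x θ, U (x, θ + 1) = U (x, θ)) (k : ℤ) :
    ∀ x θ, U (x, θ + k) = U (x, θ) := by
  induction k using Int.induction_on with
  | zero => simp
  | succ n ih =>
    intro x θ
    have h1 : (θ : ℝ) + ((n : ℤ) + 1 : ℤ) = (θ + n) + 1 := by push_cast; ring
    rw [h1, hper]
    exact_mod_cast ih x θ
  | pred n ih =>
    intro x θ
    have h1 : (θ : ℝ) + ((-(n : ℤ) - 1 : ℤ)) + 1 = θ + (-(n:ℤ) : ℤ) := by push_cast; ring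
    have := hper x (θ + ((-(n : ℤ) - 1 : ℤ)))
    rw [h1] at this
    rw [← this]
    exact_mod_cast ih x θ

private lemma fderiv_shift {E F : Type*} [NormedAddCommGroup E] [NormedSpace ℝ E]
    [NormedAddCommGroup F] [NormedSpace ℝ F]
    (f : E → F) (hf : Differentiable ℝ f) (c : E) (hc : ∀ p, f (p + c) = f p) (p : E) :
    fderiv ℝ f (p + c) = fderiv ℝ f p := by
  have h1 : HasFDerivAt (fun q => f (q + c))
      ((fderiv ℝ f (p + c)).comp (ContinuousLinearMap.id ℝ E)) p :=
    (hf (p + c)).hasFDerivAt.comp p ((hasFDerivAt_id p).add_const c)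
  have h2 : (fun q => f (q + c)) = f := funext hc
  rw [h2] at h1
  rw [h1.fderiv, ContinuousLinearMap.comp_id]

private lemma omega_formula {d : ℕ} (α : ℝ) (φ : (Fin d → ℝ) → ℝ)
    (U : (Fin d → ℝ) × ℝ → Fin d → ℝ) (hφ : ContDiff ℝ 1 φ) (hU : ContDiff ℝ 1 U)
    (ε : ℝ) (i : Fin d) (x w : Fin d → ℝ) :
    fderiv ℝ (fun y => ε ^ α * U (y, φ y / ε) i) x w
      = ε ^ α * fderiv ℝ U (x, φ x / ε) (w, fderiv ℝ φ x w / ε) i := by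
  have hφd : HasFDerivAt φ (fderiv ℝ φ x) x := (hφ.differentiable one_ne_zero x).hasFDerivAt
  have h1 : HasFDerivAt (fun y => (y, φ y / ε))
      ((ContinuousLinearMap.id ℝ (Fin d → ℝ)).prod (ε⁻¹ • fderiv ℝ φ x)) x := by
    refine (hasFDerivAt_id x).prodMk ?_
    simpa [div_eq_inv_mul] using hφd.const_mul ε⁻¹
  have h2 : HasFDerivAt U (fderiv ℝ U (x, φ x / ε)) (x, φ x / ε) :=
    (hU.differentiable one_ne_zero _).hasFDerivAt
  have h3 := h2.comp x h1
  have h4 := ((ContinuousLinearMap.proj i : ((Fin d → ℝ)) →L[ℝ] ℝ)).hasFDerivAt.comp x h3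
  have h5 := h4.const_mul (ε ^ α)
  have h5' : HasFDerivAt (fun y => ε ^ α * U (y, φ y / ε) i)
      ((ε ^ α) • ((ContinuousLinearMap.proj i : ((Fin d → ℝ)) →L[ℝ] ℝ).comp
        ((fderiv ℝ U (x, φ x / ε)).comp
          ((ContinuousLinearMap.id ℝ (Fin d → ℝ)).prod (ε⁻¹ • fderiv ℝ φ x))))) x := h5
  rw [h5'.fderiv]
  simp [div_eq_inv_mul, mul_comm]

private lemma clm_split {d : ℕ} (D : ((Fin d → ℝ) × ℝ) →L[ℝ] (Fin d → ℝ))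
    (w : Fin d → ℝ) (a : ℝ) (l : Fin d) :
    D (w, a) l = D (w, 0) l + a * D (0, 1) l := by
  have h : ((w, a) : (Fin d → ℝ) × ℝ)
      = ((w, (0:ℝ)) : (Fin d → ℝ) × ℝ) + a • ((0 : Fin d → ℝ), (1:ℝ)) := by
    simp [Prod.ext_iff]
  rw [h, map_add, map_smul]
  simp

private lemma deriv_curve {d : ℕ} (U : (Fin d → ℝ) × ℝ → Fin d → ℝ) (hU : ContDiff ℝ 1 U)
    (x₀ : Fin d → ℝ) (θ₀ : ℝ) (l : Fin d) :
    deriv (fun θ => U (x₀, θ) l) θ₀ = fderiv ℝ U (x₀, θ₀) (0, 1) l := by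
  have h1 : HasDerivAt (fun θ : ℝ => ((x₀, θ) : (Fin d → ℝ) × ℝ)) ((0 : Fin d → ℝ), (1:ℝ)) θ₀ :=
    (hasDerivAt_const θ₀ x₀).prodMk (hasDerivAt_id θ₀)
  have h2 := ((hU.differentiable one_ne_zero (x₀, θ₀)).hasFDerivAt).comp_hasDerivAt θ₀ h1
  have h3 := (ContinuousLinearMap.proj l : ((Fin d → ℝ)) →L[ℝ] ℝ).hasFDerivAt.comp_hasDerivAt θ₀ h2
  have h3' : HasDerivAt (fun θ => U (x₀, θ) l) (fderiv ℝ U (x₀, θ₀) (0, 1) l) θ₀ := h3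
  exact h3'.deriv

set_option maxHeartbeats 1000000 in
/-- Quasi-singularities: for the oscillating family `u^ε(x) = ε^α U(x, φ(x)/ε)`
with a nondegenerate oscillation, the vorticity component `Ω^ε_{ij}` becomes
arbitrarily large as `ε → 0`, indeed at least `(m/2) ε^{α-1}` for `ε` small,
while `‖u^ε‖_{L^∞} = O(ε^α) → 0`. -/
theorem stmt_16 {d : ℕ} (α : ℝ) (hα : α ∈ Set.Ioo (0:ℝ) 1)
    (φ : (Fin d → ℝ) → ℝ) (U : (Fin d → ℝ) × ℝ → Fin d → ℝ)
    (hφ : ContDiff ℝ 1 φ) (hU : ContDiff ℝ 1 U)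
    (hper : ∀ x θ, U (x, θ + 1) = U (x, θ))
    (x₀ : Fin d → ℝ) (θ₀ : ℝ) (i j : Fin d) (hij : i ≠ j)
    (hgrad : fderiv ℝ φ x₀ ≠ 0)
    (m : ℝ)
    (hm : m = |fderiv ℝ φ x₀ (Pi.single j 1) * deriv (fun θ => U (x₀, θ) i) θ₀
              - fderiv ℝ φ x₀ (Pi.single i 1)
                  * deriv (fun θ => U (x₀, θ) j) θ₀|)
    (hm0 : 0 < m) :
    (∀ C > (0:ℝ), ∃ ε₁ ∈ Set.Ioc (0:ℝ) 1, ∀ ε ∈ Set.Ioc (0:ℝ) ε₁,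
      ∃ x : Fin d → ℝ,
        C ≤ |fderiv ℝ (fun y => ε ^ α * U (y, φ y / ε) i) x (Pi.single j 1)
            - fderiv ℝ (fun y => ε ^ α * U (y, φ y / ε) j) x
                (Pi.single i 1)|) ∧
    (∃ ε₁ ∈ Set.Ioc (0:ℝ) 1, ∀ ε ∈ Set.Ioc (0:ℝ) ε₁,
      ∃ x : Fin d → ℝ,
        (m / 2) * ε ^ (α - 1)
          ≤ |fderiv ℝ (fun y => ε ^ α * U (y, φ y / ε) i) x (Pi.single j 1)
            - fderiv ℝ (fun y => ε ^ α * U (y, φ y / ε) j) x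
                (Pi.single i 1)|) := by
  obtain ⟨hα0, hα1⟩ := hα
  -- the two continuous coefficient functions
  set F : (Fin d → ℝ) → ℝ := fun x =>
    fderiv ℝ φ x (Pi.single j 1) * fderiv ℝ U (x, θ₀) (0, 1) i
    - fderiv ℝ φ x (Pi.single i 1) * fderiv ℝ U (x, θ₀) (0, 1) j with hF
  set A : (Fin d → ℝ) → ℝ := fun x =>
    fderiv ℝ U (x, θ₀) (Pi.single j 1, 0) i - fderiv ℝ U (x, θ₀) (Pi.single i 1, 0) j with hA
  have hFx₀ : |F x₀| = m := by
    rw [hm, deriv_curve U hU x₀ θ₀ i, deriv_curve U hU x₀ θ₀ j]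
  have hcφ : Continuous fun x => fderiv ℝ φ x := hφ.continuous_fderiv one_ne_zero
  have hcU : Continuous fun x : Fin d → ℝ => fderiv ℝ U (x, θ₀) :=
    (hU.continuous_fderiv one_ne_zero).comp (continuous_id.prodMk continuous_const)
  have happU : ∀ (p : (Fin d → ℝ) × ℝ) (l : Fin d),
      Continuous fun x : Fin d → ℝ => fderiv ℝ U (x, θ₀) p l :=
    fun p l => (continuous_apply l).comp (hcU.clm_apply continuous_const)
  have hFcont : Continuous F := by
    rw [hF]
    exact ((hcφ.clm_apply continuous_const).mul (happU _ i)).sub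
      ((hcφ.clm_apply continuous_const).mul (happU _ j))
  have hAcont : Continuous A := by
    rw [hA]
    exact (happU _ i).sub (happU _ j)
  obtain ⟨r1, hr1, hFr⟩ := Metric.continuousAt_iff.mp (hFcont.continuousAt (x := x₀)) (m/4) (by linarith)
  obtain ⟨r2, hr2, hAr⟩ := Metric.continuousAt_iff.mp (hAcont.continuousAt (x := x₀)) 1 one_pos
  set r := min r1 r2 with hrdef
  have hr : 0 < r := lt_min hr1 hr2
  -- direction along which φ increases
  obtain ⟨w, hw⟩ : ∃ w, fderiv ℝ φ x₀ w ≠ 0 := by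
    by_contra h
    push_neg at h
    exact hgrad (ContinuousLinearMap.ext fun w => by simp [h w])
  set v := (fderiv ℝ φ x₀ w)⁻¹ • w with hv
  have hφv : fderiv ℝ φ x₀ v = 1 := by
    rw [hv, map_smul]
    rw [smul_eq_mul, inv_mul_cancel₀ hw]
  set ψ : ℝ → ℝ := fun t => φ (x₀ + t • v) with hψ
  have hψ0 : ψ 0 = φ x₀ := by simp [hψ]
  have hψd : HasDerivAt ψ 1 0 := by
    have hcurve : HasDerivAt (fun t : ℝ => x₀ + t • v) v 0 := by
      simpa using ((hasDerivAt_id (0:ℝ)).smul_const v).const_add x₀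
    have h2 := ((hφ.differentiable one_ne_zero (x₀ + (0:ℝ) • v)).hasFDerivAt).comp_hasDerivAt 0 hcurve
    simp only [zero_smul, add_zero] at h2
    simp only [hφv] at h2
    exact h2
  -- quantitative increase of ψ near 0
  have hslope := hasDerivAt_iff_tendsto_slope.mp hψd
  have hev : ∀ᶠ t in nhdsWithin (0:ℝ) {(0:ℝ)}ᶜ, 1/2 < slope ψ 0 t :=
    hslope.eventually (eventually_gt_nhds (by norm_num))
  rw [eventually_nhdsWithin_iff] at hev
  obtain ⟨s, hs, hsl⟩ := Metric.eventually_nhds_iff.mp hev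
  set t := min (s/2) (r/(‖v‖+1)) with ht
  have hvnorm : (0:ℝ) < ‖v‖ + 1 := by positivity
  have ht0 : 0 < t := lt_min (by linarith) (by positivity)
  have hts : t < s := lt_of_le_of_lt (min_le_left _ _) (by linarith)
  have htr : t * ‖v‖ < r := by
    have h1 : t ≤ r/(‖v‖+1) := min_le_right _ _
    have h2 : t * ‖v‖ ≤ (r/(‖v‖+1)) * ‖v‖ :=
      mul_le_mul_of_nonneg_right h1 (norm_nonneg v)
    have h3 : (r/(‖v‖+1)) * ‖v‖ < r := by
      rw [div_mul_eq_mul_div, div_lt_iff₀ hvnorm]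
      nlinarith [norm_nonneg v]
    linarith
  have hslope_pos : ψ 0 + t/2 < ψ t := by
    have h1 := hsl (y := t)
      (by rw [Real.dist_eq, sub_zero, abs_of_pos ht0]; linarith)
      (Set.mem_compl_singleton_iff.mpr ht0.ne')
    rw [slope_def_field, sub_zero] at h1
    have h2 := (lt_div_iff₀ ht0).mp h1
    linarith
  have hslope_neg : ψ (-t) < ψ 0 - t/2 := by
    have h1 := hsl (y := -t)
      (by rw [Real.dist_eq, sub_zero, abs_neg, abs_of_pos ht0]; linarith)
      (Set.mem_compl_singleton_iff.mpr (neg_ne_zero.mpr ht0.ne'))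
    rw [slope_def_field, sub_zero] at h1
    have h2 := (lt_div_iff_of_neg (neg_lt_zero.mpr ht0)).mp h1
    linarith
  have hψc : Continuous ψ := hφ.continuous.comp (continuous_const.add (continuous_id.smul continuous_const))
  have hIVT : Set.Icc (ψ (-t)) (ψ t) ⊆ ψ '' Set.Icc (-t) t :=
    intermediate_value_Icc (by linarith) hψc.continuousOn
  set δ := t/2 with hδ
  set K := |A x₀| + 1 with hK
  have hK0 : 0 < K := by positivity
  clear_value K
  set ε₁ := min 1 (min δ (m/(4*K))) with hε₁def
  have hε₁0 : 0 < ε₁ := lt_min one_pos (lt_min (by positivity) (by positivity))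
  have key : ∀ ε ∈ Set.Ioc (0:ℝ) ε₁,
      ∃ x : Fin d → ℝ,
        (m / 2) * ε ^ (α - 1)
          ≤ |fderiv ℝ (fun y => ε ^ α * U (y, φ y / ε) i) x (Pi.single j 1)
            - fderiv ℝ (fun y => ε ^ α * U (y, φ y / ε) j) x (Pi.single i 1)| := by
    rintro ε ⟨hε0, hεle⟩
    have hεδ : ε ≤ δ := le_trans hεle (le_trans (min_le_right _ _) (min_le_left _ _))
    have hεK : ε ≤ m/(4*K) := le_trans hεle (le_trans (min_le_right _ _) (min_le_right _ _))
    set k : ℤ := ⌈(φ x₀ - δ)/ε - θ₀⌉ with hk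
    set yv := ε * (θ₀ + (k:ℝ)) with hyv
    have hylb : φ x₀ - δ ≤ yv := by
      have h1 : (φ x₀ - δ)/ε - θ₀ ≤ (k:ℝ) := Int.le_ceil _
      have h2 : (φ x₀ - δ)/ε ≤ θ₀ + (k:ℝ) := by linarith
      calc φ x₀ - δ = ((φ x₀ - δ)/ε) * ε := by field_simp
        _ ≤ (θ₀ + (k:ℝ)) * ε := mul_le_mul_of_nonneg_right h2 hε0.le
        _ = yv := by rw [hyv]; ring
    have hyub : yv ≤ φ x₀ + δ := by
      have h1 : (k:ℝ) < (φ x₀ - δ)/ε - θ₀ + 1 := Int.ceil_lt_add_one _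
      have h2 : (θ₀ + (k:ℝ)) * ε ≤ ((φ x₀ - δ)/ε + 1) * ε :=
        mul_le_mul_of_nonneg_right (by linarith) hε0.le
      have h3 : ((φ x₀ - δ)/ε + 1) * ε = φ x₀ - δ + ε := by field_simp
      have h4 : yv = (θ₀ + (k:ℝ)) * ε := by rw [hyv]; ring
      linarith
    have hymem : yv ∈ Set.Icc (ψ (-t)) (ψ t) := by
      rw [hψ0] at hslope_pos hslope_neg
      constructor
      · linarith
      · linarith
    obtain ⟨s', hs'mem, hψs'⟩ := hIVT hymem
    set x := x₀ + s' • v with hx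
    have hφx : φ x = yv := by rw [← hψs', hψ, hx]
    have hdist : dist x x₀ < r := by
      rw [hx, dist_eq_norm, add_sub_cancel_left, norm_smul]
      have h1 : |s'| ≤ t := abs_le.mpr ⟨hs'mem.1, hs'mem.2⟩
      calc ‖s'‖ * ‖v‖ ≤ t * ‖v‖ :=
            mul_le_mul_of_nonneg_right (by rwa [Real.norm_eq_abs]) (norm_nonneg v)
        _ < r := htr
    have hθ : φ x / ε = θ₀ + (k:ℝ) := by
      rw [hφx, hyv, mul_comm, mul_div_assoc, div_self hε0.ne', mul_one]
    have hUd : Differentiable ℝ U := hU.differentiable one_ne_zero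
    have hshift : fderiv ℝ U (x, θ₀ + (k:ℝ)) = fderiv ℝ U (x, θ₀) := by
      have hc : ∀ p : (Fin d → ℝ) × ℝ, U (p + ((0 : Fin d → ℝ), (k:ℝ))) = U p := by
        intro p
        have hp : p + ((0 : Fin d → ℝ), (k:ℝ)) = (p.1, p.2 + (k:ℝ)) := by
          ext <;> simp
        rw [hp]
        exact per_int U hper k p.1 p.2
      have h := fderiv_shift U hUd ((0 : Fin d → ℝ), (k:ℝ)) hc (x, θ₀)
      have he : ((x, θ₀) : (Fin d → ℝ) × ℝ) + ((0 : Fin d → ℝ), (k:ℝ)) = (x, θ₀ + (k:ℝ)) := by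
        ext <;> simp
      rwa [he] at h
    refine ⟨x, ?_⟩
    have hΩ : fderiv ℝ (fun y => ε ^ α * U (y, φ y / ε) i) x (Pi.single j 1)
        - fderiv ℝ (fun y => ε ^ α * U (y, φ y / ε) j) x (Pi.single i 1)
        = ε ^ α * A x + ε ^ (α - 1) * F x := by
      rw [omega_formula α φ U hφ hU ε i x (Pi.single j 1),
        omega_formula α φ U hφ hU ε j x (Pi.single i 1), hθ, hshift,
        clm_split (fderiv ℝ U (x, θ₀)) (Pi.single j 1) _ i,
        clm_split (fderiv ℝ U (x, θ₀)) (Pi.single i 1) _ j]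
      have e2 : ε ^ (α - 1) = ε ^ α * ε⁻¹ := by
        rw [Real.rpow_sub_one hε0.ne', div_eq_mul_inv]
      simp only [hF, hA, e2, div_eq_mul_inv]
      ring
    rw [hΩ]
    have hdist1 : dist x x₀ < r1 := lt_of_lt_of_le hdist (min_le_left _ _)
    have hdist2 : dist x x₀ < r2 := lt_of_lt_of_le hdist (min_le_right _ _)
    have hFx : 3*m/4 ≤ |F x| := by
      have h1 := hFr hdist1
      rw [Real.dist_eq] at h1
      have h2 := abs_sub_abs_le_abs_sub (F x₀) (F x)
      rw [hFx₀] at h2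
      rw [abs_sub_comm (F x) (F x₀)] at h1
      linarith
    have hAx : |A x| ≤ K := by
      have h1 := hAr hdist2
      rw [Real.dist_eq] at h1
      have h2 := abs_sub_abs_le_abs_sub (A x) (A x₀)
      rw [hK]
      linarith
    have hp1 : (0:ℝ) < ε ^ (α-1) := Real.rpow_pos_of_pos hε0 _
    have hp2 : (0:ℝ) < ε ^ α := Real.rpow_pos_of_pos hε0 _
    have habs : |ε^(α-1) * F x| - |ε^α * A x| ≤ |ε^α * A x + ε^(α-1) * F x| := by
      have h := abs_sub_abs_le_abs_sub (ε^(α-1) * F x) (-(ε^α * A x))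
      rw [abs_neg] at h
      have he : ε^(α-1) * F x - -(ε^α * A x) = ε^α * A x + ε^(α-1) * F x := by ring
      rwa [he] at h
    have h1 : |ε^(α-1) * F x| = ε^(α-1) * |F x| := by rw [abs_mul, abs_of_pos hp1]
    have h2 : |ε^α * A x| = ε^α * |A x| := by rw [abs_mul, abs_of_pos hp2]
    have e3 : ε^α = ε^(α-1) * ε := by
      rw [Real.rpow_sub_one hε0.ne']
      field_simp
    have hεK' : ε * K ≤ m/4 := by
      have h4 := (le_div_iff₀ (by linarith : (0:ℝ) < 4*K)).mp hεK
      have h5 : ε * (4*K) = 4 * (ε * K) := by ring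
      linarith
    have hbound1 : ε^(α-1) * (3*m/4) ≤ |ε^(α-1) * F x| := by
      rw [h1]
      exact mul_le_mul_of_nonneg_left hFx hp1.le
    have hbound2 : |ε^α * A x| ≤ ε^(α-1) * (m/4) := by
      rw [h2, e3]
      calc ε^(α-1) * ε * |A x| ≤ ε^(α-1) * ε * K := by
            exact mul_le_mul_of_nonneg_left hAx (mul_nonneg hp1.le hε0.le)
        _ ≤ ε^(α-1) * (m/4) := by
            rw [mul_assoc]
            exact mul_le_mul_of_nonneg_left hεK' hp1.le
    calc (m/2) * ε^(α-1) = ε^(α-1) * (3*m/4) - ε^(α-1) * (m/4) := by ring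
      _ ≤ |ε^(α-1) * F x| - |ε^α * A x| := by linarith
      _ ≤ |ε^α * A x + ε^(α-1) * F x| := habs

  constructor
  · intro C hC
    have hm2 : (0:ℝ) < 2*C/m := by positivity
    set E := (2*C/m) ^ ((α-1)⁻¹) with hE
    have hE0 : 0 < E := Real.rpow_pos_of_pos hm2 _
    have hEpow : E ^ (α-1) = 2*C/m := by
      rw [hE, ← Real.rpow_mul hm2.le, inv_mul_cancel₀ (sub_ne_zero.mpr (ne_of_lt hα1)),
        Real.rpow_one]
    refine ⟨min ε₁ E, ⟨lt_min hε₁0 hE0, le_trans (min_le_left _ _) (min_le_left _ _)⟩, ?_⟩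
    rintro ε ⟨hε0, hεle⟩
    obtain ⟨x, hx⟩ := key ε ⟨hε0, le_trans hεle (min_le_left _ _)⟩
    refine ⟨x, le_trans ?_ hx⟩
    have h1 : E ^ (α-1) ≤ ε ^ (α-1) :=
      Real.rpow_le_rpow_of_nonpos hε0 (le_trans hεle (min_le_right _ _)) (by linarith)
    rw [hEpow] at h1
    calc C = (m/2) * (2*C/m) := by field_simp
      _ ≤ (m/2) * ε^(α-1) := mul_le_mul_of_nonneg_left h1 (by linarith)
  · exact ⟨ε₁, ⟨hε₁0, min_le_left _ _⟩, key⟩
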